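/- Suppose t is a vertex of H(d̄) for a horoball H of the Groves–Manning space X with d̄ ≥ δ, z is a closest point of H(d̄) to *, and t ∈ B_r(*). Then d(z,t) ≤ 2δ + 1 + (r − d(*,z)); that is, B_r(*) ∩ H(d̄) ⊆ B_{2δ+1+k}(z) ∩ H(d̄) where k = r − d(*,z). -/

import Mathlib

/-! Core definitions: Cayley graphs, combinatorial horoballs, and the
Groves–Manning space of a relatively hyperbolic pair, as a locally finite graph. -/

open SimpleGraph

namespace GM

variable {G : Type} [Group G] {ι : Type}

/-- Adjacency in the Cayley graph of `G` with respect to the symmetrized set `S`. -/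
def cayleyAdj (S : Set G) (a b : G) : Prop :=
  a ≠ b ∧ (a⁻¹ * b ∈ S ∨ b⁻¹ * a ∈ S)

/-- The Cayley graph of `G` with respect to `S`. -/
def cayleyGraph (S : Set G) : SimpleGraph G where
  Adj := cayleyAdj S
  symm := by constructor; rintro a b ⟨h1, h2⟩; exact ⟨h1.symm, h2.symm⟩
  loopless := ⟨fun a h => h.1 rfl⟩

/-- The full subgraph of the Cayley graph on the left cosets of `P i`
(the union over all cosets; distinct cosets lie in distinct components). -/
def cosetGraph (S : Set G) (P : ι → Subgroup G) (i : ι) : SimpleGraph G where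
  Adj a b := cayleyAdj S a b ∧ a⁻¹ * b ∈ P i
  symm := by
    constructor
    rintro a b ⟨⟨h0, h1⟩, h2⟩
    refine ⟨⟨h0.symm, h1.symm⟩, ?_⟩
    have := (P i).inv_mem h2
    simpa [mul_inv_rev] using this
  loopless := ⟨fun a h => h.1.1 rfl⟩

/-- Vertices of the Groves–Manning space: the group `G` (depth 0), together with,
for each `i : ι` and `g : G`, a vertex `(g, k)` at depth `k ≥ 1` in the combinatorial
horoball over the coset `g • (P i)`. -/
def GMVert (G ι : Type) : Type := G ⊕ (ι × G × ℕ+)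

/-- The depth function `𝒟` on vertices. -/
def depth : GMVert G ι → ℕ
  | .inl _ => 0
  | .inr (_, _, k) => (k : ℕ)

/-- The underlying group element ("base") of a vertex. -/
def baseElt : GMVert G ι → G
  | .inl g => g
  | .inr (_, g, _) => g

/-- The vertex over `g` at depth `l` in the horoballs for the subgroup `P i`. -/
def atLevel (i : ι) (g : G) : ℕ → GMVert G ι
  | 0 => .inl g
  | (l + 1) => .inr (i, g, ⟨l + 1, Nat.succ_pos l⟩)

/-- Horizontal adjacency at depth `k ≥ 1` inside a horoball: two distinct elements of a
common left coset of `P i` whose distance in the coset graph is at most `2 ^ k`. -/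
def horizAdjPos (S : Set G) (P : ι → Subgroup G) (i : ι) (k : ℕ) (a b : G) : Prop :=
  a ≠ b ∧ a⁻¹ * b ∈ P i ∧ (cosetGraph S P i).Reachable a b ∧ (cosetGraph S P i).dist a b ≤ 2 ^ k

/-- Horizontal adjacency at depth `l` (at depth `0` this is an edge of the coset graph). -/
def hAdjL (S : Set G) (P : ι → Subgroup G) (i : ι) (l : ℕ) (a b : G) : Prop :=
  match l with
  | 0 => (cosetGraph S P i).Adj a b
  | (m + 1) => horizAdjPos S P i (m + 1) a b

/-- Adjacency in the Groves–Manning space: Cayley edges at depth 0, vertical edges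
joining `(g, k)` to `(g, k+1)`, and horizontal horoball edges. -/
def gmAdj (S : Set G) (P : ι → Subgroup G) : GMVert G ι → GMVert G ι → Prop
  | .inl a, .inl b => cayleyAdj S a b
  | .inl a, .inr (_, b, k) => a = b ∧ (k : ℕ) = 1
  | .inr (_, a, k), .inl b => a = b ∧ (k : ℕ) = 1
  | .inr (i, a, k), .inr (j, b, l) =>
      i = j ∧ ((a = b ∧ ((l : ℕ) = (k : ℕ) + 1 ∨ (k : ℕ) = (l : ℕ) + 1)) ∨
        ((k : ℕ) = (l : ℕ) ∧ horizAdjPos S P i (k : ℕ) a b))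

/-- The (1-skeleton of the) Groves–Manning space of `(G, {P i}, S)`. -/
def GMGraph (S : Set G) (P : ι → Subgroup G) : SimpleGraph (GMVert G ι) where
  Adj := gmAdj S P
  symm := by
    constructor
    rintro (a | ⟨i, a, k⟩) (b | ⟨j, b, l⟩) h
    · exact ⟨h.1.symm, h.2.symm⟩
    · exact ⟨h.1.symm, h.2⟩
    · exact ⟨h.1.symm, h.2⟩
    · obtain ⟨rfl, (⟨rfl, hv⟩ | ⟨hk, hh⟩)⟩ := h
      · exact ⟨rfl, Or.inl ⟨rfl, hv.symm⟩⟩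
      · refine ⟨rfl, Or.inr ⟨hk.symm, hh.1.symm, ?_, hh.2.2.1.symm, ?_⟩⟩
        · have := (P i).inv_mem hh.2.1; simpa [mul_inv_rev] using this
        · rw [SimpleGraph.dist_comm, ← hk]; exact hh.2.2.2
  loopless := by
    constructor
    rintro (a | ⟨i, a, k⟩) h
    · exact h.1 rfl
    · obtain ⟨-, (⟨-, hv⟩ | ⟨-, hh⟩)⟩ := h
      · omega
      · exact hh.1 rfl

variable (S : Set G) (P : ι → Subgroup G)

/-- The identity vertex `*` of the Groves–Manning space. -/
def idv : GMVert G ι := Sum.inl 1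

/-- The ball `B_r(c)` of radius `r` about `c`, in the edge-path metric of the
Groves–Manning space. -/
def gball (c : GMVert G ι) (r : ℕ) : Set (GMVert G ι) :=
  {v | (GMGraph S P).dist c v ≤ r}

/-- The horoball over the coset `t • (P i)`. -/
def horoball (i : ι) (t : G) : Set (GMVert G ι) :=
  fun v => match v with
  | .inl g => t⁻¹ * g ∈ P i
  | .inr (j, g, _) => j = i ∧ t⁻¹ * g ∈ P i

/-- `H(m)`: the vertices of the horoball at depth exactly `m`. -/
def horoSphere (i : ι) (t : G) (m : ℕ) : Set (GMVert G ι) :=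
  {v | v ∈ horoball P i t ∧ depth v = m}

/-- `H^m`: the `m`-horoball, all vertices of the horoball at depth at least `m`. -/
def horoDeep (i : ι) (t : G) (m : ℕ) : Set (GMVert G ι) :=
  {v | v ∈ horoball P i t ∧ m ≤ depth v}

/-- A walk is geodesic if its length realizes the graph distance of its endpoints. -/
def IsGeodesic {V : Type} (Γ : SimpleGraph V) {a b : V} (p : Γ.Walk a b) : Prop :=
  p.length = Γ.dist a b

/-- `Γ` is `δ`-hyperbolic: all geodesic triangles are `δ`-slim. -/
def SlimTriangles {V : Type} (Γ : SimpleGraph V) (δ : ℕ) : Prop :=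
  ∀ ⦃a b c : V⦄ (p : Γ.Walk a b) (q : Γ.Walk b c) (r : Γ.Walk a c),
    IsGeodesic Γ p → IsGeodesic Γ q → IsGeodesic Γ r →
    ∀ v ∈ r.support,
      (∃ w ∈ p.support, Γ.dist v w ≤ δ) ∨ (∃ w ∈ q.support, Γ.dist v w ≤ δ)


/-! ### Auxiliary development for Statement 10 -/

set_option linter.unusedSectionVars false

section Aux

variable {S : Set G} {P : ι → Subgroup G}

lemma depth_atLevel (j : ι) (b : G) (k : ℕ) : depth (atLevel j b k : GMVert G ι) = k := by
  cases k <;> rfl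

lemma baseElt_atLevel (j : ι) (b : G) (k : ℕ) : baseElt (atLevel j b k : GMVert G ι) = b := by
  cases k <;> rfl

lemma inr_eq_atLevel (j : ι) (b : G) (k : ℕ+) :
    (Sum.inr (j, b, k) : GMVert G ι) = atLevel j b (k : ℕ) := by
  obtain ⟨k, hk⟩ := k
  cases k with
  | zero => omega
  | succ n => rfl

lemma atLevel_mem_horoball {i : ι} {g b : G} (hb : g⁻¹ * b ∈ P i) (k : ℕ) :
    atLevel i b k ∈ horoball P i g := by
  cases k with
  | zero => exact hb
  | succ n => exact ⟨rfl, hb⟩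

lemma adj_depth_le {u v : GMVert G ι} (h : (GMGraph S P).Adj u v) :
    depth u ≤ depth v + 1 ∧ depth v ≤ depth u + 1 := by
  obtain (a | ⟨j, a, k⟩) := u <;> obtain (b | ⟨j', b, l⟩) := v
  · simp [depth]
  · obtain ⟨-, hk⟩ := h; simp [depth, hk]
  · obtain ⟨-, hk⟩ := h; simp [depth, hk]
  · obtain ⟨-, (⟨-, hv⟩ | ⟨hk, -⟩)⟩ := h <;> simp only [depth] <;> omega

/-- From a horoball vertex of positive depth, all neighbours stay in the horoball. -/
lemma adj_mem_horoball {i : ι} {g : G} {u v : GMVert G ι} (hu : u ∈ horoball P i g)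
    (hd : 1 ≤ depth u) (h : (GMGraph S P).Adj u v) : v ∈ horoball P i g := by
  obtain (a | ⟨j, a, k⟩) := u
  · simp [depth] at hd
  · obtain ⟨hj, ha⟩ := hu
    subst hj
    obtain (b | ⟨j', b, l⟩) := v
    · obtain ⟨rfl, -⟩ := h
      exact ha
    · obtain ⟨hj', hrest⟩ := h
      subst hj'
      refine ⟨rfl, ?_⟩
      rcases hrest with ⟨rfl, -⟩ | ⟨-, hh⟩
      · exact ha
      · have := (P j).mul_mem ha hh.2.1
        simpa [mul_assoc] using this

/-- Classification of edges between two vertices of a common horoball: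
either a vertical edge (same base), or a horizontal edge (same depth) whose
base displacement in the coset graph is at most `2 ^ depth`. -/
lemma adj_cover {i : ι} {g : G} {u v : GMVert G ι}
    (hu : u ∈ horoball P i g) (hv : v ∈ horoball P i g)
    (h : (GMGraph S P).Adj u v) :
    baseElt u = baseElt v ∨
      (depth u = depth v ∧ (cosetGraph S P i).Reachable (baseElt u) (baseElt v) ∧
        (cosetGraph S P i).dist (baseElt u) (baseElt v) ≤ 2 ^ depth u) := by
  obtain (a | ⟨j, a, k⟩) := u <;> obtain (b | ⟨j', b, l⟩) := v
  · right
    have hab : a⁻¹ * b ∈ P i := by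
      have := (P i).mul_mem ((P i).inv_mem hu) hv
      simpa [mul_inv_rev, mul_assoc] using this
    have hadj : (cosetGraph S P i).Adj a b := ⟨h, hab⟩
    refine ⟨rfl, hadj.reachable, ?_⟩
    simpa [depth, baseElt] using (SimpleGraph.dist_eq_one_iff_adj.mpr hadj).le
  · obtain ⟨rfl, -⟩ := h; exact Or.inl rfl
  · obtain ⟨rfl, -⟩ := h; exact Or.inl rfl
  · obtain ⟨hj, hrest⟩ := h
    subst hj
    obtain ⟨hji, -⟩ := hu
    subst hji
    rcases hrest with ⟨rfl, -⟩ | ⟨hkl, hh⟩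
    · exact Or.inl rfl
    · exact Or.inr ⟨hkl, hh.2.2.1, hh.2.2.2⟩

lemma walk_depth_le {u v : GMVert G ι} (w : (GMGraph S P).Walk u v) :
    depth v ≤ depth u + w.length ∧ depth u ≤ depth v + w.length := by
  induction w with
  | nil => simp
  | cons h p ih =>
    have h2 := adj_depth_le h
    rw [SimpleGraph.Walk.length_cons]
    omega

lemma walk_exit {i : ι} {g : G} {u x : GMVert G ι} (w : (GMGraph S P).Walk u x)
    (hu : u ∈ horoball P i g) (hx : x ∉ horoball P i g) :
    depth u + 1 ≤ w.length := by
  induction w with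
  | nil => exact absurd hu hx
  | @cons a a' c h p ih =>
    rw [SimpleGraph.Walk.length_cons]
    by_cases hmem : a' ∈ horoball P i g
    · have := ih hmem hx
      have h2 := adj_depth_le h
      omega
    · have : depth a = 0 := by
        by_contra hne
        exact hmem (adj_mem_horoball hu (by omega) h)
      omega

lemma reach_dist_triangle {V : Type} {Γ : SimpleGraph V} {a b c : V}
    (h1 : Γ.Reachable a b) (h2 : Γ.Reachable b c) :
    Γ.dist a c ≤ Γ.dist a b + Γ.dist b c := by
  obtain ⟨p, hp⟩ := h1.exists_walk_length_eq_dist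
  obtain ⟨q, hq⟩ := h2.exists_walk_length_eq_dist
  calc Γ.dist a c ≤ (p.append q).length := SimpleGraph.dist_le _
  _ = _ := by rw [SimpleGraph.Walk.length_append, hp, hq]

lemma mem_of_dist_le_depth {i : ι} {g : G} {u x : GMVert G ι}
    (hu : u ∈ horoball P i g) (hre : (GMGraph S P).Reachable u x)
    (hle : (GMGraph S P).dist u x ≤ depth u) : x ∈ horoball P i g := by
  by_contra hx
  obtain ⟨w, hw⟩ := hre.exists_walk_length_eq_dist
  have := walk_exit w hu hx
  omega

end Aux

section Aux2

variable {S : Set G} {P : ι → Subgroup G}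

lemma atLevel_adj (j : ι) (b : G) (k : ℕ) :
    (GMGraph S P).Adj (atLevel j b k) (atLevel j b (k + 1)) := by
  cases k with
  | zero => exact ⟨rfl, rfl⟩
  | succ n => exact ⟨rfl, Or.inl ⟨rfl, Or.inl rfl⟩⟩

/-- The vertical walk in a horoball from level `k` up (i.e. deeper) to level `k + n`. -/
def upWalk (S : Set G) (P : ι → Subgroup G) (j : ι) (b : G) :
    ∀ (n k : ℕ), (GMGraph S P).Walk (atLevel j b k) (atLevel j b (k + n))
  | 0, _ => SimpleGraph.Walk.nil
  | n+1, k => (upWalk S P j b n k).concat (atLevel_adj j b (k + n))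

@[simp] lemma upWalk_length (j : ι) (b : G) (n k : ℕ) :
    (upWalk S P j b n k).length = n := by
  induction n with
  | zero => simp [upWalk]
  | succ n ih => rw [upWalk, SimpleGraph.Walk.length_concat, ih]

lemma upWalk_support (j : ι) (b : G) (n k : ℕ) :
    ∀ x ∈ (upWalk S P j b n k).support, ∃ m, k ≤ m ∧ m ≤ k + n ∧ x = atLevel j b m := by
  induction n with
  | zero =>
    intro x hx
    rw [upWalk, SimpleGraph.Walk.support_nil] at hx
    simp at hx
    exact ⟨k, le_rfl, by omega, hx⟩
  | succ n ih =>
    intro x hx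
    rw [upWalk, SimpleGraph.Walk.support_concat] at hx
    rcases List.mem_append.mp hx with hx | hx
    · obtain ⟨m, h1, h2, h3⟩ := ih x hx
      exact ⟨m, h1, by omega, h3⟩
    · simp at hx
      exact ⟨k + n + 1, by omega, by omega, hx⟩

lemma dist_ge_depth {u v : GMVert G ι} (h : (GMGraph S P).Reachable u v) :
    depth u ≤ depth v + (GMGraph S P).dist u v ∧
      depth v ≤ depth u + (GMGraph S P).dist u v := by
  obtain ⟨w, hw⟩ := h.exists_walk_length_eq_dist
  have := walk_depth_le w
  omega

/-! ### Coset graph reachability -/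

lemma cosetGraph_adj_mul (i : ι) (γ : G) {a b : G} (h : (cosetGraph S P i).Adj a b) :
    (cosetGraph S P i).Adj (γ * a) (γ * b) := by
  obtain ⟨⟨hne, hS⟩, hP⟩ := h
  refine ⟨⟨fun hc => hne (mul_left_cancel hc), ?_⟩, ?_⟩
  · simpa [mul_assoc] using hS
  · simpa [mul_assoc] using hP

/-- Left translation as a graph homomorphism of the coset graph. -/
def cosetMulHom (S : Set G) (P : ι → Subgroup G) (i : ι) (γ : G) :
    cosetGraph S P i →g cosetGraph S P i where
  toFun x := γ * x
  map_rel' := cosetGraph_adj_mul i γ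

@[simp] lemma cosetMulHom_apply (i : ι) (γ x : G) : cosetMulHom S P i γ x = γ * x := rfl

lemma cosetReach_one (i : ι) (hPgen : Subgroup.closure ((S : Set G) ∩ (P i : Set G)) = P i)
    {x : G} (hx : x ∈ P i) : (cosetGraph S P i).Reachable 1 x := by
  rw [← hPgen] at hx
  induction hx using Subgroup.closure_induction with
  | mem s hs =>
    by_cases h1 : (1 : G) = s
    · rw [← h1]
    · refine SimpleGraph.Adj.reachable ⟨⟨h1, Or.inl (by simpa using hs.1)⟩, ?_⟩
      simpa using (hPgen ▸ Subgroup.subset_closure hs : s ∈ P i)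
  | one => rfl
  | mul x y hx' hy' hrx hry =>
    refine hrx.trans ?_
    have := hry.map (cosetMulHom S P i x)
    simpa using this
  | inv x hx' hrx =>
    have := hrx.map (cosetMulHom S P i x⁻¹)
    simp only [cosetMulHom_apply, mul_one, inv_mul_cancel] at this
    exact this.symm

lemma cosetReach (i : ι) (hPgen : Subgroup.closure ((S : Set G) ∩ (P i : Set G)) = P i)
    {a b : G} (h : a⁻¹ * b ∈ P i) : (cosetGraph S P i).Reachable a b := by
  have := (cosetReach_one i hPgen h).map (cosetMulHom S P i a)
  simpa [mul_inv_cancel_left] using this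

lemma cosetWalk_mem (i : ι) :
    ∀ {x y : G} (w : (cosetGraph S P i).Walk x y), ∀ v ∈ w.support, x⁻¹ * v ∈ P i := by
  intro x y w
  induction w with
  | nil =>
    intro v hv
    simp at hv
    simpa [hv] using (P i).one_mem
  | @cons a a' c h p ih =>
    intro v hv
    rw [SimpleGraph.Walk.support_cons] at hv
    rcases List.mem_cons.mp hv with rfl | hv
    · simpa using (P i).one_mem
    · have h1 : a⁻¹ * a' ∈ P i := h.2
      have h2 := ih v hv
      have := (P i).mul_mem h1 h2
      simpa [mul_assoc] using this

/-! ### Splitting a walk -/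

lemma walk_split {V : Type} {Γ : SimpleGraph V} :
    ∀ {x y : V} (p : Γ.Walk x y) (c : ℕ), ∃ (u : V) (w₁ : Γ.Walk x u) (w₂ : Γ.Walk u y),
      w₁.length = min c p.length ∧ w₁.length + w₂.length = p.length := by
  intro x y p
  induction p with
  | nil => intro c; exact ⟨_, .nil, .nil, by simp, by simp⟩
  | @cons a a' c' h p ih =>
    intro c
    cases c with
    | zero => exact ⟨a, .nil, .cons h p, by simp, by simp⟩
    | succ n =>
      obtain ⟨u, w₁, w₂, h1, h2⟩ := ih n
      refine ⟨u, .cons h w₁, w₂, ?_, ?_⟩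
      · rw [SimpleGraph.Walk.length_cons, SimpleGraph.Walk.length_cons, h1]
        omega
      · rw [SimpleGraph.Walk.length_cons, SimpleGraph.Walk.length_cons]
        omega

/-! ### Horizontal edges and chunked horizontal walks -/

lemma horiz_adj {j : ι} {m : ℕ} (hm : 1 ≤ m) {x y : G} (hxy : x ≠ y) (hP : x⁻¹ * y ∈ P j)
    (hre : (cosetGraph S P j).Reachable x y) (hdist : (cosetGraph S P j).dist x y ≤ 2 ^ m) :
    (GMGraph S P).Adj (atLevel j x m) (atLevel j y m) := by
  obtain ⟨m', rfl⟩ : ∃ m', m = m' + 1 := ⟨m - 1, by omega⟩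
  exact ⟨rfl, Or.inr ⟨rfl, hxy, hP, hre, hdist⟩⟩

lemma chunkWalk {j : ι} {m : ℕ} (hm : 1 ≤ m) :
    ∀ (n : ℕ) (x y : G), x⁻¹ * y ∈ P j → (cosetGraph S P j).Reachable x y →
      (cosetGraph S P j).dist x y ≤ n * 2 ^ m →
      ∃ w : (GMGraph S P).Walk (atLevel j x m) (atLevel j y m), w.length ≤ n := by
  intro n
  induction n with
  | zero =>
    intro x y hP hre hd
    have hd0 : (cosetGraph S P j).dist x y = 0 := by simpa using hd
    have hxy : x = y := hre.dist_eq_zero_iff.mp hd0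
    subst hxy
    exact ⟨.nil, le_rfl⟩
  | succ n ih =>
    intro x y hP hre hd
    by_cases hxy : x = y
    · subst hxy; exact ⟨.nil, by simp⟩
    by_cases hsmall : (cosetGraph S P j).dist x y ≤ 2 ^ m
    · exact ⟨.cons (horiz_adj hm hxy hP hre hsmall) .nil, by simp⟩
    · obtain ⟨p, hp⟩ := hre.exists_walk_length_eq_dist
      have hpow : 1 ≤ 2 ^ m := Nat.one_le_two_pow
      obtain ⟨u, w₁, w₂, hmin, hsum⟩ := walk_split p (2 ^ m)
      have hplen : 2 ^ m ≤ p.length := by rw [hp]; omega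
      have hw1 : w₁.length = 2 ^ m := by rw [hmin, min_eq_left hplen]
      have hd1 : (cosetGraph S P j).dist x u ≤ 2 ^ m :=
        le_trans (SimpleGraph.dist_le w₁) (by omega)
      have hd2 : (cosetGraph S P j).dist u y ≤ n * 2 ^ m := by
        have h1 := SimpleGraph.dist_le w₂
        have h2 : (n + 1) * 2 ^ m = n * 2 ^ m + 2 ^ m := by ring
        omega
      have hPu : x⁻¹ * u ∈ P j := cosetWalk_mem j w₁ u w₁.end_mem_support
      have hxu : x ≠ u := by
        intro hcontra
        subst hcontra
        have h5 := SimpleGraph.dist_le w₂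
        omega
      have hPuy : u⁻¹ * y ∈ P j := by
        have := (P j).mul_mem ((P j).inv_mem hPu) hP
        simpa [mul_inv_rev, mul_assoc] using this
      obtain ⟨w', hw'⟩ := ih u y hPuy w₂.reachable hd2
      exact ⟨.cons (horiz_adj hm hxu hPu w₁.reachable hd1) w', by
        rw [SimpleGraph.Walk.length_cons]; omega⟩

end Aux2

section Aux3

variable {S : Set G} {P : ι → Subgroup G}

/-! ### Ceiling division -/

/-- Ceiling division `⌈R / c⌉`. -/
def cdiv (R c : ℕ) : ℕ := (R + c - 1) / c

lemma cdiv_le_iff {c : ℕ} (hc : 0 < c) {R n : ℕ} : cdiv R c ≤ n ↔ R ≤ n * c := by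
  unfold cdiv
  rw [Nat.div_le_iff_le_mul_add_pred hc]
  have h := Nat.mul_comm c n
  omega

lemma le_cdiv_mul {c : ℕ} (hc : 0 < c) (R : ℕ) : R ≤ cdiv R c * c :=
  (cdiv_le_iff hc).mp le_rfl

lemma one_le_cdiv {c R : ℕ} (hc : 0 < c) (hR : 1 ≤ R) : 1 ≤ cdiv R c := by
  by_contra h
  have h0 : cdiv R c ≤ 0 := by omega
  have := (cdiv_le_iff hc).mp h0
  omega

/-- Existence of the optimal descent level for the V-shaped geodesic:
the least `s` with at most 3 horizontal edges at depth `dbar + s`, which also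
minimises `2 s + ⌈R / 2 ^ (dbar + s)⌉`. -/
lemma exists_opt (R dbar : ℕ) (hR : 1 ≤ R) :
    ∃ s h, h = cdiv R (2 ^ (dbar + s)) ∧ 1 ≤ h ∧ h ≤ 3 ∧
      ∀ s', 2 * s + h ≤ 2 * s' + cdiv R (2 ^ (dbar + s')) := by
  classical
  have hc : ∀ s : ℕ, (0:ℕ) < 2 ^ (dbar + s) := fun s => pow_pos (by norm_num : (0:ℕ) < 2) _
  set hfun : ℕ → ℕ := fun s => cdiv R (2 ^ (dbar + s)) with hhfun
  have hanti : ∀ s, hfun (s + 1) ≤ hfun s := by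
    intro s
    rw [hhfun]
    simp only
    rw [cdiv_le_iff (hc (s+1))]
    calc R ≤ cdiv R (2 ^ (dbar + s)) * 2 ^ (dbar + s) := le_cdiv_mul (hc s) R
    _ ≤ cdiv R (2 ^ (dbar + s)) * 2 ^ (dbar + (s + 1)) := by
        apply Nat.mul_le_mul_left
        apply Nat.pow_le_pow_right (by norm_num)
        omega
  have h1 : ∀ s, 1 ≤ hfun s := fun s => one_le_cdiv (hc s) hR
  have hex : ∃ s, hfun s ≤ 3 := by
    refine ⟨R, ?_⟩
    rw [hhfun]
    simp only
    rw [cdiv_le_iff (hc R)]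
    calc R ≤ 2 ^ R := (Nat.lt_two_pow_self (n := R)).le
    _ ≤ 2 ^ (dbar + R) := Nat.pow_le_pow_right (by norm_num) (by omega)
    _ ≤ 3 * 2 ^ (dbar + R) := by omega
  set s₀ := Nat.find hex with hs₀
  have hles : hfun s₀ ≤ 3 := Nat.find_spec hex
  -- below s₀ the function f decreases
  have hstep_down : ∀ s, s + 1 ≤ s₀ → 2 * (s + 1) + hfun (s + 1) ≤ 2 * s + hfun s := by
    intro s hs
    have hbig : ¬ hfun s ≤ 3 := Nat.find_min hex (by omega)
    have h4 : 4 ≤ hfun s := by omega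
    have hkey : hfun (s + 1) ≤ hfun s - 2 := by
      rw [hhfun]
      simp only
      rw [cdiv_le_iff (hc (s+1))]
      have e1 : R ≤ hfun s * 2 ^ (dbar + s) := le_cdiv_mul (hc s) R
      have e2 : 2 ^ (dbar + (s + 1)) = 2 * 2 ^ (dbar + s) := by
        rw [← pow_succ', ← Nat.add_assoc]
      calc R ≤ hfun s * 2 ^ (dbar + s) := e1
      _ ≤ (hfun s - 2) * (2 * 2 ^ (dbar + s)) := by
          have : hfun s ≤ (hfun s - 2) * 2 := by omega
          calc hfun s * 2 ^ (dbar + s) ≤ ((hfun s - 2) * 2) * 2 ^ (dbar + s) :=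
            Nat.mul_le_mul_right _ this
          _ = (hfun s - 2) * (2 * 2 ^ (dbar + s)) := by ring
      _ = (hfun s - 2) * 2 ^ (dbar + (s + 1)) := by rw [e2]
    omega
  -- from s₀ upward the function f increases
  have hle3up : ∀ d, hfun (s₀ + d) ≤ 3 := by
    intro d
    induction d with
    | zero => exact hles
    | succ d ih => exact le_trans (hanti (s₀ + d)) ih
  have hstep_up : ∀ d, 2 * s₀ + hfun s₀ ≤ 2 * (s₀ + d) + hfun (s₀ + d) := by
    intro d
    induction d with
    | zero => simp
    | succ d ih =>
      have a1 := hle3up d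
      have a2 := h1 (s₀ + d + 1)
      have : s₀ + (d + 1) = (s₀ + d) + 1 := by omega
      rw [this]
      omega
  refine ⟨s₀, hfun s₀, rfl, h1 s₀, hles, ?_⟩
  intro s'
  rcases le_or_gt s₀ s' with hcase | hcase
  · obtain ⟨d, rfl⟩ : ∃ d, s' = s₀ + d := ⟨s' - s₀, by omega⟩
    exact hstep_up d
  · -- s' < s₀ : iterate hstep_down
    have hgen : ∀ d s', s' + d = s₀ → 2 * s₀ + hfun s₀ ≤ 2 * s' + hfun s' := by
      intro d
      induction d with
      | zero =>
        intro s' hs'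
        have e : s' = s₀ := by omega
        rw [e]
      | succ d ih =>
        intro s' hs'
        have e1 := hstep_down s' (by omega)
        have e2 := ih (s' + 1) (by omega)
        omega
    exact hgen (s₀ - s') s' (by omega)

/-! ### The combinatorial lower bound for walks inside a horoball -/

lemma walk_cover {i : ι} {g : G} :
    ∀ {a b : GMVert G ι} (w : (GMGraph S P).Walk a b),
      (∀ x ∈ w.support, x ∈ horoball P i g) →
      ∃ m va vb slack, va + depth a = m ∧ vb + depth b = m ∧
        va + vb + slack = w.length ∧
        (cosetGraph S P i).Reachable (baseElt a) (baseElt b) ∧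
        (cosetGraph S P i).dist (baseElt a) (baseElt b) ≤ slack * 2 ^ m := by
  intro a b w
  induction w with
  | @nil u =>
    intro _
    exact ⟨depth u, 0, 0, 0, by omega, by omega, by simp, .refl _, by simp⟩
  | @cons a a' c hadj p ih =>
    intro hsup
    have ha : a ∈ horoball P i g := hsup _ (SimpleGraph.Walk.start_mem_support _)
    have ha' : a' ∈ horoball P i g := by
      apply hsup
      rw [SimpleGraph.Walk.support_cons]
      exact List.mem_cons_of_mem _ (SimpleGraph.Walk.start_mem_support _)
    obtain ⟨m', va', vb', slack', hva', hvb', hsum', hre', hcov'⟩ := ih (fun x hx => by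
      apply hsup
      rw [SimpleGraph.Walk.support_cons]
      exact List.mem_cons_of_mem _ hx)
    have hdep := adj_depth_le hadj
    rw [SimpleGraph.Walk.length_cons]
    rcases adj_cover ha ha' hadj with hbase | ⟨hdeq, hre0, hcov0⟩
    · -- vertical edge: same base element
      rcases le_or_gt (depth a) m' with hle | hlt
      · -- stay at the same maximum
        refine ⟨m', m' - depth a, vb', p.length + 1 - (m' - depth a) - vb', by omega, hvb',
          by omega, by rw [hbase]; exact hre', ?_⟩
        rw [hbase]
        refine le_trans hcov' (Nat.mul_le_mul_right _ ?_)
        omega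
      · -- the new vertex is deeper than everything so far
        have h1 : depth a = m' + 1 := by omega
        have h2 : depth a' = m' := by omega
        have h3 : va' = 0 := by omega
        refine ⟨m' + 1, 0, vb' + 1, slack', by omega, by omega, by omega,
          by rw [hbase]; exact hre', ?_⟩
        rw [hbase]
        refine le_trans hcov' (Nat.mul_le_mul_left _ ?_)
        exact Nat.pow_le_pow_right (by norm_num) (by omega)
    · -- horizontal edge: same depth, controlled coset displacement
      have hle : depth a ≤ m' := by omega
      refine ⟨m', va', vb', slack' + 1, by omega, hvb', by omega,
        hre0.trans hre', ?_⟩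
      calc (cosetGraph S P i).dist (baseElt a) (baseElt c)
          ≤ (cosetGraph S P i).dist (baseElt a) (baseElt a') +
            (cosetGraph S P i).dist (baseElt a') (baseElt c) :=
            reach_dist_triangle hre0 hre'
      _ ≤ 2 ^ depth a + slack' * 2 ^ m' := Nat.add_le_add hcov0 hcov'
      _ ≤ 2 ^ m' + slack' * 2 ^ m' := by
          have := Nat.pow_le_pow_right (show 1 ≤ 2 by norm_num) hle
          omega
      _ = (slack' + 1) * 2 ^ m' := by ring

end Aux3

section Aux4

variable {S : Set G} {P : ι → Subgroup G}

/-- Crossing lemma: a walk ending deep inside a horoball, starting outside the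
deep part, passes a vertex of the horosphere at depth `dbar`, after which it
still has to descend. -/
lemma walk_cross {i : ι} {g : G} {dbar : ℕ} {a v : GMVert G ι}
    (w : (GMGraph S P).Walk a v) (hv : v ∈ horoball P i g) (hvd : dbar ≤ depth v)
    (ha : ¬(a ∈ horoball P i g ∧ dbar ≤ depth a)) :
    ∃ u, u ∈ horoball P i g ∧ depth u = dbar ∧
      (GMGraph S P).dist a u + (depth v - dbar) ≤ w.length := by
  induction w with
  | nil => exact absurd ⟨hv, hvd⟩ ha
  | @cons a a' c hadj p ih =>
    rw [SimpleGraph.Walk.length_cons]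
    by_cases h' : a' ∈ horoball P i g ∧ dbar ≤ depth a'
    · have hda' : depth a' = dbar := by
        by_contra hne
        have hgt : dbar + 1 ≤ depth a' := by omega
        have haH : a ∈ horoball P i g := adj_mem_horoball h'.1 (by omega) hadj.symm
        have hdep := adj_depth_le hadj
        exact ha ⟨haH, by omega⟩
      refine ⟨a', h'.1, hda', ?_⟩
      have h1 : (GMGraph S P).dist a a' ≤ 1 := by
        have := SimpleGraph.dist_le (SimpleGraph.Walk.cons hadj SimpleGraph.Walk.nil)
        simpa using this
      have h2 := walk_depth_le p
      omega
    · obtain ⟨u, h1, h2, h3⟩ := ih hv hvd h'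
      refine ⟨u, h1, h2, ?_⟩
      have htri : (GMGraph S P).dist a u ≤ 1 + (GMGraph S P).dist a' u := by
        by_cases hru : (GMGraph S P).Reachable a' u
        · have := reach_dist_triangle (hadj.reachable) hru
          have hd1 : (GMGraph S P).dist a a' ≤ 1 := by
            have := SimpleGraph.dist_le (SimpleGraph.Walk.cons hadj SimpleGraph.Walk.nil)
            simpa using this
          omega
        · have : (GMGraph S P).dist a u = 0 := by
            apply SimpleGraph.dist_eq_zero_of_not_reachable
            intro hcon
            exact hru ((hadj.reachable.symm).trans hcon)
          omega
      omega

/-! ### Connectivity -/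

lemma cayley_adj_mul (γ : G) {a b : G} (h : (cayleyGraph S).Adj a b) :
    (cayleyGraph S).Adj (γ * a) (γ * b) := by
  obtain ⟨hne, hS⟩ := h
  refine ⟨fun hc => hne (mul_left_cancel hc), ?_⟩
  simpa [mul_assoc] using hS

def cayleyMulHom (S : Set G) (γ : G) : cayleyGraph S →g cayleyGraph S where
  toFun x := γ * x
  map_rel' := cayley_adj_mul γ

@[simp] lemma cayleyMulHom_apply (γ x : G) : cayleyMulHom S γ x = γ * x := rfl

def inlHom (S : Set G) (P : ι → Subgroup G) : cayleyGraph S →g GMGraph S P where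
  toFun x := Sum.inl x
  map_rel' h := h

@[simp] lemma inlHom_apply (x : G) : inlHom S P x = Sum.inl x := rfl

lemma gm_connected (hSgen : Subgroup.closure S = ⊤) : (GMGraph S P).Connected := by
  have hcayley : ∀ x : G, (cayleyGraph S).Reachable 1 x := by
    intro x
    have hx : x ∈ Subgroup.closure S := hSgen ▸ Subgroup.mem_top x
    induction hx using Subgroup.closure_induction with
    | mem s hs =>
      by_cases h1 : (1 : G) = s
      · rw [← h1]
      · exact SimpleGraph.Adj.reachable ⟨h1, Or.inl (by simpa using hs)⟩
    | one => rfl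
    | mul x y hx' hy' hrx hry =>
      refine hrx.trans ?_
      have := hry.map (cayleyMulHom S x)
      simpa using this
    | inv x hx' hrx =>
      have := hrx.map (cayleyMulHom S x⁻¹)
      simp only [cayleyMulHom_apply, mul_one, inv_mul_cancel] at this
      exact this.symm
  have hinl : ∀ x : G, (GMGraph S P).Reachable (Sum.inl 1) (Sum.inl x) := by
    intro x
    have := (hcayley x).map (inlHom S P)
    simpa using this
  have hvert : ∀ u : GMVert G ι, (GMGraph S P).Reachable (Sum.inl (baseElt u)) u := by
    intro u
    obtain (b | ⟨j, b, k⟩) := u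
    · rfl
    · show (GMGraph S P).Reachable (Sum.inl b) (Sum.inr (j, b, k))
      rw [inr_eq_atLevel]
      exact ⟨(upWalk S P j b (k : ℕ) 0).copy rfl (by rw [Nat.zero_add])⟩
  have : Nonempty (GMVert G ι) := ⟨Sum.inl 1⟩
  refine ⟨fun u v => ?_⟩
  have h1 := ((hinl (baseElt u)).trans (hvert u)).symm
  have h2 := (hinl (baseElt v)).trans (hvert v)
  exact h1.trans h2

/-- Splitting of distances along a geodesic walk, at any vertex of its support. -/
lemma geodesic_split {V : Type} {Γ : SimpleGraph V} {a b : V} (p : Γ.Walk a b)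
    (hp : IsGeodesic Γ p) {x : V} (hx : x ∈ p.support) :
    Γ.dist a x + Γ.dist x b = Γ.dist a b ∧ Γ.dist a x ≤ p.length ∧ Γ.dist x b ≤ p.length := by
  classical
  have hspec := p.take_spec hx
  have hlen : (p.takeUntil x hx).length + (p.dropUntil x hx).length = p.length := by
    rw [← SimpleGraph.Walk.length_append, hspec]
  have h1 : Γ.dist a x ≤ (p.takeUntil x hx).length := SimpleGraph.dist_le _
  have h2 : Γ.dist x b ≤ (p.dropUntil x hx).length := SimpleGraph.dist_le _
  have h3 : Γ.dist a b ≤ Γ.dist a x + Γ.dist x b :=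
    reach_dist_triangle ⟨p.takeUntil x hx⟩ ⟨p.dropUntil x hx⟩
  have h4 : p.length = Γ.dist a b := hp
  omega

end Aux4
end GM

open GM in
/-- Suppose `t` is a vertex of `H(dbar)` for a horoball `H` of the
Groves–Manning space `X` with `dbar ≥ δ`, `z` is a closest point of `H(dbar)` to `*`, and
`t ∈ B_r(*)`.  Then `d(z,t) ≤ 2δ + 1 + (r − d(*,z))`; that is,
`B_r(*) ∩ H(dbar) ⊆ B_{2δ+1+k}(z) ∩ H(dbar)` where `k = r − d(*,z)`. -/
theorem statement_10 {G : Type} [Group G] {ι : Type} [Fintype ι]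
    (S : Finset G) (P : ι → Subgroup G)
    (hSgen : Subgroup.closure (S : Set G) = ⊤)
    (hPgen : ∀ i, Subgroup.closure ((S : Set G) ∩ (P i : Set G)) = P i)
    (hProper : ∀ i, P i ≠ ⊤)
    (δ : ℕ) (hδ : 1 ≤ δ) (hhyp : SlimTriangles (GMGraph (S : Set G) P) δ)
    (i : ι) (g : G) (dbar : ℕ) (hd : δ ≤ dbar) (r : ℕ)
    (z : GMVert G ι) (hz : z ∈ horoSphere P i g dbar)
    (hzmin : ∀ w ∈ horoSphere P i g dbar,
      (GMGraph (S : Set G) P).dist idv z ≤ (GMGraph (S : Set G) P).dist idv w) :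
    (∀ t ∈ horoSphere P i g dbar, t ∈ gball (S : Set G) P idv r →
      (GMGraph (S : Set G) P).dist z t ≤
        2 * δ + 1 + (r - (GMGraph (S : Set G) P).dist idv z)) ∧
    gball (S : Set G) P idv r ∩ horoSphere P i g dbar ⊆
      gball (S : Set G) P z (2 * δ + 1 + (r - (GMGraph (S : Set G) P).dist idv z)) ∩
        horoSphere P i g dbar := by
  classical
  have hconn : (GMGraph (S : Set G) P).Connected := gm_connected hSgen
  have hdbar1 : 1 ≤ dbar := le_trans hδ hd
  have key : ∀ t ∈ horoSphere P i g dbar, t ∈ gball (S : Set G) P idv r →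
      (GMGraph (S : Set G) P).dist z t ≤
        2 * δ + 1 + (r - (GMGraph (S : Set G) P).dist idv z) := by
    intro t ht htr
    obtain ⟨htH, htd⟩ := ht
    obtain ⟨hzH, hzd⟩ := hz
    -- peel off the structure of z and t
    obtain (zb | ⟨jz, zb, kz⟩) := z
    · exfalso; simp [depth] at hzd; omega
    obtain ⟨hjz, hzb⟩ := hzH
    obtain (tb | ⟨jt, tb, kt⟩) := t
    · exfalso; simp [depth] at htd; omega
    obtain ⟨hjt, htb⟩ := htH
    have hkz : (kz : ℕ) = dbar := hzd
    have hkt : (kt : ℕ) = dbar := htd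
    have hzrep : (Sum.inr (jz, zb, kz) : GMVert G ι) = atLevel i zb dbar := by
      rw [hjz, inr_eq_atLevel, hkz]
    have htrep : (Sum.inr (jt, tb, kt) : GMVert G ι) = atLevel i tb dbar := by
      rw [hjt, inr_eq_atLevel, hkt]
    rw [hzrep, htrep]
    rw [hzrep] at hzmin
    have htr' : (GMGraph (S : Set G) P).dist idv (atLevel i tb dbar) ≤ r := by
      rw [← htrep]; exact htr
    have hTD : (GMGraph (S : Set G) P).dist idv (atLevel i zb dbar) ≤
        (GMGraph (S : Set G) P).dist idv (atLevel i tb dbar) :=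
      hzmin _ ⟨atLevel_mem_horoball htb dbar, depth_atLevel i tb dbar⟩
    by_cases hzbtb : zb = tb
    · subst hzbtb
      rw [SimpleGraph.dist_self]
      exact Nat.zero_le _
    -- basic coset data
    have hPzt : zb⁻¹ * tb ∈ P i := by
      have := (P i).mul_mem ((P i).inv_mem hzb) htb
      simpa [mul_inv_rev, mul_assoc] using this
    have hreach : (cosetGraph (S : Set G) P i).Reachable zb tb := cosetReach i (hPgen i) hPzt
    obtain ⟨R, hRdef⟩ : ∃ R, (cosetGraph (S : Set G) P i).dist zb tb = R := ⟨_, rfl⟩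
    have hR1 : 1 ≤ R := by
      have := hreach.pos_dist_of_ne hzbtb
      omega
    -- the optimal descent depth
    obtain ⟨s, hcnt, hcnt_def, hcnt1, hcnt3, hminf⟩ := exists_opt R dbar hR1
    have hm1 : 1 ≤ dbar + s := by omega
    -- ===== Step 1: every geodesic from z to t stays inside the horoball =====
    have hRN : R ≤ 2 ^ (dbar + R) := le_trans (Nat.lt_two_pow_self (n := R)).le
      (Nat.pow_le_pow_right (by norm_num) (by omega))
    have hN1 : 1 ≤ dbar + R := by omega
    have hadjN : (GMGraph (S : Set G) P).Adj (atLevel i zb (dbar + R))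
        (atLevel i tb (dbar + R)) :=
      horiz_adj hN1 hzbtb hPzt hreach (by rw [hRdef]; exact hRN)
    have hdisttN : (GMGraph (S : Set G) P).dist (atLevel i zb dbar)
        (atLevel i tb (dbar + R)) ≤ R + 1 := by
      have h0 := SimpleGraph.dist_le ((upWalk (S : Set G) P i zb R dbar).concat hadjN)
      rw [SimpleGraph.Walk.length_concat, upWalk_length] at h0
      exact h0
    obtain ⟨η, hηlen'⟩ :=
      (hconn (atLevel i zb dbar) (atLevel i tb (dbar + R))).exists_walk_length_eq_dist
    have hηgeo : IsGeodesic (GMGraph (S : Set G) P) η := hηlen'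
    have hηlen : η.length ≤ R + 1 := by rw [hηlen']; exact hdisttN
    have hηsup : ∀ x ∈ η.support, x ∈ horoball P i g ∧ dbar ≤ depth x := by
      intro x hx
      have hspec := η.take_spec hx
      have hlen2 : (η.takeUntil x hx).length + (η.dropUntil x hx).length = η.length := by
        rw [← SimpleGraph.Walk.length_append, hspec]
      constructor
      · by_contra hxH
        have l1 := walk_exit (η.takeUntil x hx) (atLevel_mem_horoball hzb dbar) hxH
        have l2 := walk_exit ((η.dropUntil x hx).reverse)
          (atLevel_mem_horoball htb (dbar + R)) hxH
        rw [SimpleGraph.Walk.length_reverse] at l2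
        rw [depth_atLevel] at l1 l2
        omega
      · by_contra hxd
        have l1 := walk_depth_le (η.takeUntil x hx)
        have l2 := walk_depth_le (η.dropUntil x hx)
        simp only [depth_atLevel] at l1 l2
        omega
    have hqlen : ((upWalk (S : Set G) P i tb R dbar).reverse).length = R := by
      rw [SimpleGraph.Walk.length_reverse, upWalk_length]
    have hqgeo : IsGeodesic (GMGraph (S : Set G) P)
        ((upWalk (S : Set G) P i tb R dbar).reverse) := by
      unfold IsGeodesic
      have hge := dist_ge_depth (⟨(upWalk (S : Set G) P i tb R dbar).reverse⟩ :
        (GMGraph (S : Set G) P).Reachable (atLevel i tb (dbar + R)) (atLevel i tb dbar))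
      have hle := SimpleGraph.dist_le ((upWalk (S : Set G) P i tb R dbar).reverse)
      simp only [depth_atLevel] at hge
      omega
    have hqsup : ∀ x ∈ ((upWalk (S : Set G) P i tb R dbar).reverse).support,
        x ∈ horoball P i g ∧ dbar ≤ depth x := by
      intro x hx
      rw [SimpleGraph.Walk.support_reverse, List.mem_reverse] at hx
      obtain ⟨mm, hmm1, hmm2, rfl⟩ := upWalk_support i tb R dbar x hx
      exact ⟨atLevel_mem_horoball htb mm, by rw [depth_atLevel]; omega⟩
    have hconv : ∀ (γ : (GMGraph (S : Set G) P).Walk (atLevel i zb dbar) (atLevel i tb dbar)),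
        IsGeodesic (GMGraph (S : Set G) P) γ → ∀ x ∈ γ.support, x ∈ horoball P i g := by
      intro γ hγ x hx
      rcases hhyp η ((upWalk (S : Set G) P i tb R dbar).reverse) γ hηgeo hqgeo hγ x hx with
        ⟨w, hw, hdw⟩ | ⟨w, hw, hdw⟩
      · obtain ⟨hwH, hwd⟩ := hηsup w hw
        refine mem_of_dist_le_depth hwH (hconn w x) ?_
        rw [SimpleGraph.dist_comm]
        omega
      · obtain ⟨hwH, hwd⟩ := hqsup w hw
        refine mem_of_dist_le_depth hwH (hconn w x) ?_
        rw [SimpleGraph.dist_comm]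
        omega
    -- ===== Step 2: the combinatorial lower bound for dist z t =====
    obtain ⟨γ, hγlen⟩ :=
      (hconn (atLevel i zb dbar) (atLevel i tb dbar)).exists_walk_length_eq_dist
    have hγgeo : IsGeodesic (GMGraph (S : Set G) P) γ := hγlen
    obtain ⟨M, va, vb, slack, hva, hvb, hsum, -, hcov⟩ := walk_cover γ (hconv γ hγgeo)
    simp only [depth_atLevel, baseElt_atLevel] at hva hvb hcov
    rw [hRdef] at hcov
    have hlow : 2 * s + hcnt ≤
        (GMGraph (S : Set G) P).dist (atLevel i zb dbar) (atLevel i tb dbar) := by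
      have h1 := hminf va
      have h2 : cdiv R (2 ^ (dbar + va)) ≤ slack := by
        rw [cdiv_le_iff (pow_pos (by norm_num : (0:ℕ) < 2) _)]
        have he : dbar + va = M := by omega
        rw [he]
        exact hcov
      omega
    -- ===== Step 3: a V-shaped geodesic from z to t with a controlled vertex =====
    have hsplit_pt : ∃ u₁ : G, zb ≠ u₁ ∧ zb⁻¹ * u₁ ∈ P i ∧
        (cosetGraph (S : Set G) P i).Reachable zb u₁ ∧
        (cosetGraph (S : Set G) P i).Reachable u₁ tb ∧
        u₁⁻¹ * tb ∈ P i ∧ (cosetGraph (S : Set G) P i).dist zb u₁ ≤ 2 ^ (dbar + s) ∧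
        (cosetGraph (S : Set G) P i).dist u₁ tb ≤ (hcnt - 1) * 2 ^ (dbar + s) := by
      by_cases hsm : R ≤ 2 ^ (dbar + s)
      · refine ⟨tb, hzbtb, hPzt, hreach, .refl _, by simpa using (P i).one_mem,
          by rw [hRdef]; exact hsm, ?_⟩
        rw [SimpleGraph.dist_self]
        exact Nat.zero_le _
      · push_neg at hsm
        obtain ⟨p, hp⟩ := hreach.exists_walk_length_eq_dist
        rw [hRdef] at hp
        have hpow : 1 ≤ 2 ^ (dbar + s) := Nat.one_le_two_pow
        obtain ⟨u, w₁, w₂, hmin2, hsum2⟩ := walk_split p (2 ^ (dbar + s))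
        have hplen : 2 ^ (dbar + s) ≤ p.length := by rw [hp]; omega
        have hw1 : w₁.length = 2 ^ (dbar + s) := by rw [hmin2, min_eq_left hplen]
        have hd1 : (cosetGraph (S : Set G) P i).dist zb u ≤ 2 ^ (dbar + s) :=
          le_trans (SimpleGraph.dist_le w₁) (le_of_eq hw1)
        have hPu : zb⁻¹ * u ∈ P i := cosetWalk_mem i w₁ u w₁.end_mem_support
        have hne : zb ≠ u := by
          intro hc
          subst hc
          have := SimpleGraph.dist_le w₂
          omega
        have hPuy : u⁻¹ * tb ∈ P i := by
          have := (P i).mul_mem ((P i).inv_mem hPu) hPzt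
          simpa [mul_inv_rev, mul_assoc] using this
        have hd2 : (cosetGraph (S : Set G) P i).dist u tb ≤ (hcnt - 1) * 2 ^ (dbar + s) := by
          have h5 := SimpleGraph.dist_le w₂
          have h6 : R ≤ hcnt * 2 ^ (dbar + s) := by
            rw [hcnt_def]
            exact le_cdiv_mul (pow_pos (by norm_num : (0:ℕ) < 2) _) R
          have h7 : hcnt * 2 ^ (dbar + s) = (hcnt - 1) * 2 ^ (dbar + s) + 2 ^ (dbar + s) := by
            have he : hcnt - 1 + 1 = hcnt := by omega
            conv_lhs => rw [← he]
            rw [Nat.succ_mul]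
          omega
        exact ⟨u, hne, hPu, w₁.reachable, w₂.reachable, hPuy, hd1, hd2⟩
    obtain ⟨u₁, hu1ne, hu1P, hu1re, hu1re2, hu1P2, hu1d, hu1d2⟩ := hsplit_pt
    obtain ⟨wB, hwBlen⟩ := chunkWalk hm1 (hcnt - 1) u₁ tb hu1P2 hu1re2 hu1d2
    have hzv : (GMGraph (S : Set G) P).dist (atLevel i zb dbar)
        (atLevel i u₁ (dbar + s)) ≤ s + 1 := by
      have h0 := SimpleGraph.dist_le ((upWalk (S : Set G) P i zb s dbar).concat
        (horiz_adj hm1 hu1ne hu1P hu1re hu1d))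
      rw [SimpleGraph.Walk.length_concat, upWalk_length] at h0
      exact h0
    have hvt : (GMGraph (S : Set G) P).dist (atLevel i u₁ (dbar + s))
        (atLevel i tb dbar) ≤ (hcnt - 1) + s := by
      have h0 := SimpleGraph.dist_le
        (wB.append ((upWalk (S : Set G) P i tb s dbar).reverse))
      rw [SimpleGraph.Walk.length_append, SimpleGraph.Walk.length_reverse,
        upWalk_length] at h0
      omega
    obtain ⟨W, hWlen, hWsup⟩ : ∃ Wk : (GMGraph (S : Set G) P).Walk (atLevel i zb dbar)
        (atLevel i tb dbar), Wk.length ≤ 2 * s + hcnt ∧ atLevel i u₁ (dbar + s) ∈ Wk.support := by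
      refine ⟨((upWalk (S : Set G) P i zb s dbar).concat
        (horiz_adj hm1 hu1ne hu1P hu1re hu1d)).append
        (wB.append ((upWalk (S : Set G) P i tb s dbar).reverse)), ?_, ?_⟩
      · rw [SimpleGraph.Walk.length_append, SimpleGraph.Walk.length_concat,
          SimpleGraph.Walk.length_append, SimpleGraph.Walk.length_reverse,
          upWalk_length, upWalk_length]
        omega
      · rw [SimpleGraph.Walk.mem_support_append_iff]
        left
        exact SimpleGraph.Walk.end_mem_support _
    have hWdist : (GMGraph (S : Set G) P).dist (atLevel i zb dbar) (atLevel i tb dbar)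
        = 2 * s + hcnt := by
      have h1 := SimpleGraph.dist_le W
      omega
    have hWgeo : IsGeodesic (GMGraph (S : Set G) P) W := by
      unfold IsGeodesic
      have h1 := SimpleGraph.dist_le W
      omega
    -- ===== Step 4: minimality of z forces v to be far from the basepoint =====
    have hvH : atLevel i u₁ (dbar + s) ∈ horoball P i g := by
      refine atLevel_mem_horoball ?_ (dbar + s)
      have := (P i).mul_mem hzb hu1P
      simpa [mul_assoc] using this
    obtain ⟨wI, hwIlen⟩ := (hconn idv (atLevel i u₁ (dbar + s))).exists_walk_length_eq_dist
    obtain ⟨u', hu'H, hu'd, hu'le⟩ := walk_cross (dbar := dbar) wI hvH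
      (by rw [depth_atLevel]; omega)
      (by
        rintro ⟨-, hcon⟩
        have hdepthidv : depth (idv : GMVert G ι) = 0 := rfl
        omega)
    have hminu : (GMGraph (S : Set G) P).dist idv (atLevel i zb dbar) ≤
        (GMGraph (S : Set G) P).dist idv u' := hzmin u' ⟨hu'H, hu'd⟩
    have hK : (GMGraph (S : Set G) P).dist idv (atLevel i zb dbar) + s ≤
        (GMGraph (S : Set G) P).dist idv (atLevel i u₁ (dbar + s)) := by
      rw [← hwIlen]
      rw [depth_atLevel] at hu'le
      omega
    -- ===== Step 5: the slim triangle over z, idv, t applied at v =====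
    obtain ⟨pz, hpz⟩ := (hconn idv (atLevel i zb dbar)).exists_walk_length_eq_dist
    obtain ⟨qt, hqt⟩ := (hconn idv (atLevel i tb dbar)).exists_walk_length_eq_dist
    have hpzgeo : IsGeodesic (GMGraph (S : Set G) P) pz.reverse := by
      unfold IsGeodesic
      rw [SimpleGraph.Walk.length_reverse, hpz, SimpleGraph.dist_comm]
    have hqtgeo : IsGeodesic (GMGraph (S : Set G) P) qt := hqt
    have hpzgeo' : IsGeodesic (GMGraph (S : Set G) P) pz := hpz
    rcases hhyp pz.reverse qt W hpzgeo hqtgeo hWgeo (atLevel i u₁ (dbar + s)) hWsup with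
      ⟨w, hw, hdw⟩ | ⟨w, hw, hdw⟩
    · -- v is close to the geodesic [z, idv]
      rw [SimpleGraph.Walk.support_reverse, List.mem_reverse] at hw
      obtain ⟨e1, -, -⟩ := geodesic_split pz hpzgeo' hw
      have t1 : (GMGraph (S : Set G) P).dist idv (atLevel i u₁ (dbar + s)) ≤
          (GMGraph (S : Set G) P).dist idv w +
          (GMGraph (S : Set G) P).dist w (atLevel i u₁ (dbar + s)) :=
        hconn.dist_triangle
      have t2 : (GMGraph (S : Set G) P).dist w (atLevel i u₁ (dbar + s)) =
          (GMGraph (S : Set G) P).dist (atLevel i u₁ (dbar + s)) w :=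
        SimpleGraph.dist_comm
      have t3 : (GMGraph (S : Set G) P).dist (atLevel i zb dbar) (atLevel i u₁ (dbar + s)) ≤
          (GMGraph (S : Set G) P).dist (atLevel i zb dbar) w +
          (GMGraph (S : Set G) P).dist w (atLevel i u₁ (dbar + s)) := hconn.dist_triangle
      have t4 : (GMGraph (S : Set G) P).dist (atLevel i zb dbar) w =
          (GMGraph (S : Set G) P).dist w (atLevel i zb dbar) := SimpleGraph.dist_comm
      have t5 : (GMGraph (S : Set G) P).dist (atLevel i zb dbar) (atLevel i tb dbar) ≤
          (GMGraph (S : Set G) P).dist (atLevel i zb dbar) (atLevel i u₁ (dbar + s)) +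
          (GMGraph (S : Set G) P).dist (atLevel i u₁ (dbar + s)) (atLevel i tb dbar) :=
        hconn.dist_triangle
      omega
    · -- v is close to the geodesic [idv, t]
      obtain ⟨e1, -, -⟩ := geodesic_split qt hqtgeo hw
      have t1 : (GMGraph (S : Set G) P).dist idv (atLevel i u₁ (dbar + s)) ≤
          (GMGraph (S : Set G) P).dist idv w +
          (GMGraph (S : Set G) P).dist w (atLevel i u₁ (dbar + s)) :=
        hconn.dist_triangle
      have t2 : (GMGraph (S : Set G) P).dist w (atLevel i u₁ (dbar + s)) =
          (GMGraph (S : Set G) P).dist (atLevel i u₁ (dbar + s)) w :=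
        SimpleGraph.dist_comm
      have t3 : (GMGraph (S : Set G) P).dist (atLevel i u₁ (dbar + s)) (atLevel i tb dbar) ≤
          (GMGraph (S : Set G) P).dist (atLevel i u₁ (dbar + s)) w +
          (GMGraph (S : Set G) P).dist w (atLevel i tb dbar) := hconn.dist_triangle
      have t5 : (GMGraph (S : Set G) P).dist (atLevel i zb dbar) (atLevel i tb dbar) ≤
          (GMGraph (S : Set G) P).dist (atLevel i zb dbar) (atLevel i u₁ (dbar + s)) +
          (GMGraph (S : Set G) P).dist (atLevel i u₁ (dbar + s)) (atLevel i tb dbar) :=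
        hconn.dist_triangle
      omega
  refine ⟨key, ?_⟩
  rintro x ⟨hx1, hx2⟩
  exact ⟨key x hx2 hx1, hx2⟩
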